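/- arXiv:1807.08527 — 6 statements merged into one kernel-verified Lean document; each statement's English description precedes it below -/
import Mathlib

section
/- The improper integral ∫₀¹ (−x·cot(πx) − 1/(π(1−x))) dx converges and equals −ln(2π)/π. -/
open Real Filter

/-- `g(x) = −x·cot(πx) − 1/(π(1−x))`. -/
noncomputable def g (x : ℝ) : ℝ := -x * Real.cot (π * x) - 1 / (π * (1 - x))

open MeasureTheory intervalIntegral Set Topology

noncomputable def flog (x : ℝ) : ℝ := Real.log (Real.sin (π * x))

lemma sin_pi_mul_pos {x : ℝ} (h0 : 0 < x) (h1 : x < 1) : 0 < Real.sin (π * x) :=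
  Real.sin_pos_of_pos_of_lt_pi (by positivity) (by nlinarith [Real.pi_pos])

lemma two_mul_le_sin {x : ℝ} (h0 : 0 ≤ x) (h1 : x ≤ 1/2) : 2*x ≤ Real.sin (π*x) := by
  have h := Real.mul_le_sin (x := π*x) (by positivity) (by nlinarith [Real.pi_pos])
  calc 2*x = 2/π * (π*x) := by field_simp
  _ ≤ Real.sin (π*x) := h

lemma flog_reflect (x : ℝ) : flog (1 - x) = flog x := by
  unfold flog
  rw [mul_sub, mul_one, Real.sin_pi_sub]

-- integrability of -log on [0,1]
lemma intInt_neg_log : IntervalIntegrable (fun x : ℝ => -Real.log x) volume 0 1 := by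
  apply intervalIntegrable_deriv_of_nonneg (g := fun x : ℝ => x - x * Real.log x)
  · exact (continuous_id.sub (Real.continuous_mul_log)).continuousOn
  · intro x hx
    simp only [ge_iff_le, zero_le_one, min_eq_left, max_eq_right] at hx
    have h1 : HasDerivAt (fun y : ℝ => y * Real.log y) (Real.log x + 1) x := by
      simpa [mul_inv_cancel₀ hx.1.ne', Pi.mul_def] using (hasDerivAt_id' x).mul (Real.hasDerivAt_log hx.1.ne')
    simpa [Pi.sub_def] using (hasDerivAt_id' x).sub h1
  · intro x hx
    simp only [ge_iff_le, zero_le_one, min_eq_left, max_eq_right] at hx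
    simp only [neg_nonneg]
    exact Real.log_nonpos hx.1.le hx.2.le

lemma measurable_flog : Measurable flog :=
  Real.measurable_log.comp ((Real.continuous_sin.comp (continuous_const.mul continuous_id)).measurable)

lemma intInt_flog : IntervalIntegrable flog volume 0 1 := by
  rw [intervalIntegrable_iff_integrableOn_Ioo_of_le zero_le_one]
  have hmaj : IntegrableOn (fun x : ℝ => -Real.log 2 - Real.log x - Real.log (1 - x)) (Ioo 0 1) := by
    have h1 : IntervalIntegrable (fun x : ℝ => -Real.log 2 - Real.log x - Real.log (1 - x)) volume 0 1 := by
      have ha : IntervalIntegrable (fun x : ℝ => -Real.log (1 - x)) volume 0 1 := by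
        have := (intInt_neg_log.comp_sub_left 1).symm
        simpa using this
      have hb : IntervalIntegrable (fun _ : ℝ => -Real.log 2) volume 0 1 :=
        intervalIntegrable_const
      simpa [sub_eq_add_neg] using (hb.add intInt_neg_log).add ha
    rw [intervalIntegrable_iff_integrableOn_Ioo_of_le zero_le_one] at h1
    exact h1
  refine Integrable.mono' hmaj (measurable_flog.aestronglyMeasurable.restrict) ?_
  filter_upwards [ae_restrict_mem measurableSet_Ioo] with x hx
  have hs : 0 < Real.sin (π * x) := sin_pi_mul_pos hx.1 hx.2
  have hle : Real.sin (π * x) ≤ 1 := Real.sin_le_one _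
  have hlow : 2 * x * (1 - x) ≤ Real.sin (π * x) := by
    rcases le_total x (1/2) with h | h
    · nlinarith [two_mul_le_sin hx.1.le h, hx.1, hx.2]
    · have := two_mul_le_sin (x := 1 - x) (by linarith [hx.2]) (by linarith)
      rw [show π * (1 - x) = π - π * x by ring, Real.sin_pi_sub] at this
      nlinarith [hx.1, hx.2]
  unfold flog
  rw [Real.norm_eq_abs, abs_of_nonpos (Real.log_nonpos hs.le hle)]
  have h2 : 0 < 2 * x * (1 - x) := by nlinarith [hx.1, hx.2]
  have := Real.log_le_log h2 hlow
  rw [show (2:ℝ) * x * (1-x) = 2 * (x * (1-x)) by ring] at this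
  rw [Real.log_mul (by norm_num) (mul_pos hx.1 (by linarith [hx.2] : (0:ℝ) < 1 - x)).ne', Real.log_mul hx.1.ne' (by linarith [hx.2] : (0:ℝ) < 1 - x).ne'] at this
  linarith

lemma flog_double {x : ℝ} (h0 : 0 < x) (h1 : x < 1) :
    flog x = Real.log 2 + flog (x/2) + flog ((1-x)/2) := by
  have hs1 : 0 < Real.sin (π * (x/2)) := sin_pi_mul_pos (by linarith) (by linarith)
  have hs2 : 0 < Real.sin (π * ((1-x)/2)) := sin_pi_mul_pos (by linarith) (by linarith)
  unfold flog
  have hsin : Real.sin (π * x) = 2 * Real.sin (π * (x/2)) * Real.cos (π * (x/2)) := by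
    rw [← Real.sin_two_mul]; ring_nf
  have hcos : Real.cos (π * (x/2)) = Real.sin (π * ((1-x)/2)) := by
    rw [show π * ((1-x)/2) = π/2 - π * (x/2) by ring, Real.sin_pi_div_two_sub]
  rw [hsin, hcos, mul_assoc, Real.log_mul two_ne_zero (by positivity),
    Real.log_mul hs1.ne' hs2.ne']
  ring

lemma intInt_flog_half1 : IntervalIntegrable flog volume 0 (1/2) :=
  intInt_flog.mono_set (by
    rw [Set.uIcc_of_le (by norm_num : (0:ℝ) ≤ 1/2), Set.uIcc_of_le zero_le_one]
    exact Set.Icc_subset_Icc le_rfl (by norm_num))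

lemma intInt_flog_half2 : IntervalIntegrable flog volume (1/2) 1 :=
  intInt_flog.mono_set (by
    rw [Set.uIcc_of_le (by norm_num : (1/2:ℝ) ≤ 1), Set.uIcc_of_le zero_le_one]
    exact Set.Icc_subset_Icc (by norm_num) le_rfl)

lemma h4 : IntervalIntegrable (fun x => flog (x/2)) volume 0 1 := by
  have h := intInt_flog_half1.comp_mul_right (c := 1/2)
  norm_num at h
  simpa [div_eq_mul_inv] using h

lemma h5 : IntervalIntegrable (fun x => flog ((1-x)/2)) volume 0 1 := by
  have h := (h4.comp_sub_left 1).symm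
  simpa using h

lemma I_eq : ∫ x in (0:ℝ)..1, flog x = -Real.log 2 := by
  have hJ : ∫ x in (1/2:ℝ)..1, flog x = ∫ x in (0:ℝ)..(1/2), flog x := by
    have h := intervalIntegral.integral_comp_sub_left (a := (0:ℝ)) (b := 1/2) flog 1
    simp only [flog_reflect] at h
    norm_num at h
    rw [h]
  have hsplit : (∫ x in (0:ℝ)..(1/2), flog x) + ∫ x in (1/2:ℝ)..1, flog x
      = ∫ x in (0:ℝ)..1, flog x :=
    integral_add_adjacent_intervals intInt_flog_half1 intInt_flog_half2
  have hI2 : ∫ x in (0:ℝ)..1, flog (x/2) = 2 * ∫ x in (0:ℝ)..(1/2), flog x := by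
    have h := intervalIntegral.integral_comp_div (a := (0:ℝ)) (b := 1) (c := 2) (f := flog)
      two_ne_zero
    rw [h]; norm_num
  have hI3 : ∫ x in (0:ℝ)..1, flog ((1-x)/2) = 2 * ∫ x in (0:ℝ)..(1/2), flog x := by
    have h := intervalIntegral.integral_comp_sub_left (a := (0:ℝ)) (b := 1)
      (fun y => flog (y/2)) 1
    rw [h]; norm_num [hI2]

  have hae : ∀ᵐ x : ℝ ∂volume, x ≠ 1 := by
    refine ae_iff.mpr ?_
    simpa using measure_singleton (1:ℝ)
  have key : ∫ x in (0:ℝ)..1, flog x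
      = ∫ x in (0:ℝ)..1, (Real.log 2 + flog (x/2) + flog ((1-x)/2)) := by
    apply intervalIntegral.integral_congr_ae
    filter_upwards [hae] with x hx hmem
    rw [uIoc_of_le zero_le_one] at hmem
    exact flog_double hmem.1 (lt_of_le_of_ne hmem.2 hx)
  rw [integral_add (intervalIntegrable_const.add h4) h5,
    integral_add intervalIntegrable_const h4, intervalIntegral.integral_const] at key
  simp only [smul_eq_mul] at key
  rw [hJ] at hsplit
  rw [hI2, hI3] at key
  linarith

noncomputable def LL (x : ℝ) : ℝ := ∫ u in (0:ℝ)..x, flog u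

noncomputable def G (x : ℝ) : ℝ :=
  (x * Real.log (Real.sin (π*x) / (π*(1-x))) + x * Real.log π + (x-1) * Real.log (1-x)) / π
    - LL x / π

lemma continuousOn_flog : ContinuousOn flog (Ioo 0 1) := by
  apply ContinuousOn.log
  · exact (Real.continuous_sin.comp (continuous_const.mul continuous_id)).continuousOn
  · intro y hy; exact (sin_pi_mul_pos hy.1 hy.2).ne'

lemma LL_cont : ContinuousOn LL (Icc 0 1) := by
  have h : IntegrableOn flog (uIcc 0 1) volume := by
    have h2 := intInt_flog
    rw [intervalIntegrable_iff, uIoc_of_le zero_le_one] at h2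
    rw [uIcc_of_le zero_le_one, integrableOn_Icc_iff_integrableOn_Ioc]
    exact h2
  exact (by simpa [uIcc_of_le zero_le_one] using continuousOn_primitive_interval (a := 0) (b := 1) h :
    ContinuousOn (fun x => ∫ u in (0:ℝ)..x, flog u) (Icc 0 1))

lemma LL_deriv {x : ℝ} (hx : x ∈ Ioo (0:ℝ) 1) : HasDerivAt LL (flog x) x := by
  refine intervalIntegral.integral_hasDerivAt_right ?_ ?_ ?_
  · refine intInt_flog.mono_set ?_
    rw [uIcc_of_le hx.1.le, uIcc_of_le zero_le_one]
    exact Icc_subset_Icc le_rfl hx.2.le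
  · exact continuousOn_flog.stronglyMeasurableAtFilter isOpen_Ioo x hx
  · exact continuousOn_flog.continuousAt (isOpen_Ioo.mem_nhds hx)

lemma G_deriv {x : ℝ} (hx : x ∈ Ioo (0:ℝ) 1) : HasDerivAt G (-(g x)) x := by
  obtain ⟨h0, h1⟩ := hx
  have hs : 0 < Real.sin (π * x) := sin_pi_mul_pos h0 h1
  have h1x : (0:ℝ) < 1 - x := by linarith
  -- the simpler formula
  set G₀ : ℝ → ℝ := fun y => (y * Real.log (Real.sin (π*y)) - Real.log (1-y)) / π - LL y / π
    with hG₀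
  have heq : G =ᶠ[nhds x] G₀ := by
    filter_upwards [isOpen_Ioo.mem_nhds (⟨h0, h1⟩ : x ∈ Ioo (0:ℝ) 1)] with y hy
    have hsy : 0 < Real.sin (π * y) := sin_pi_mul_pos hy.1 hy.2
    have h1y : (0:ℝ) < 1 - y := by linarith [hy.2]
    simp only [G, hG₀]
    rw [Real.log_div hsy.ne' (by positivity), Real.log_mul Real.pi_ne_zero h1y.ne']
    ring
  have hsin : HasDerivAt (fun y : ℝ => Real.sin (π * y)) (Real.cos (π * x) * π) x := by
    have := (Real.hasDerivAt_sin (π * x)).comp x ((hasDerivAt_id x).const_mul π)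
    simpa [Function.comp_def] using this
  have hlogsin : HasDerivAt (fun y : ℝ => Real.log (Real.sin (π * y)))
      (Real.cos (π * x) * π / Real.sin (π * x)) x := hsin.log hs.ne'
  have hmul : HasDerivAt (fun y : ℝ => y * Real.log (Real.sin (π * y)))
      (1 * Real.log (Real.sin (π * x)) + x * (Real.cos (π * x) * π / Real.sin (π * x))) x :=
    (hasDerivAt_id x).mul hlogsin
  have h1my : HasDerivAt (fun y : ℝ => 1 - y) (-1 : ℝ) x := by
    simpa using (hasDerivAt_id x).const_sub 1
  have hlog1x : HasDerivAt (fun y : ℝ => Real.log (1 - y)) (-1 / (1 - x)) x :=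
    h1my.log h1x.ne'
  have hL : HasDerivAt LL (flog x) x := LL_deriv ⟨h0, h1⟩
  have hG₀d : HasDerivAt G₀
      ((1 * Real.log (Real.sin (π * x)) + x * (Real.cos (π * x) * π / Real.sin (π * x))
        - -1 / (1 - x)) / π - flog x / π) x :=
    ((hmul.sub hlog1x).div_const π).sub (hL.div_const π)
  have : HasDerivAt G ((1 * Real.log (Real.sin (π * x)) + x * (Real.cos (π * x) * π / Real.sin (π * x))
        - -1 / (1 - x)) / π - flog x / π) x := hG₀d.congr_of_eventuallyEq heq
  convert this using 1
  unfold g flog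
  rw [Real.cot_eq_cos_div_sin]
  field_simp
  ring

lemma G_deriv_nonneg {x : ℝ} (hx : x ∈ Ioo (0:ℝ) 1) : 0 ≤ -(g x) := by
  obtain ⟨h0, h1⟩ := hx
  have hs : 0 < Real.sin (π * x) := sin_pi_mul_pos h0 h1
  have h1x : (0:ℝ) < 1 - x := by linarith
  have hπ := Real.pi_pos
  have hN : 0 ≤ x * (π * (1 - x)) * Real.cos (π * x) + Real.sin (π * x) := by
    rcases le_or_gt 0 (Real.cos (π * x)) with hc | hc
    · have : 0 ≤ x * (π * (1 - x)) * Real.cos (π * x) := by positivity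
      linarith
    · -- x > 1/2 ; set u = 1 - x
      have hu1 : π * (1 - x) < π / 2 := by
        by_contra hcon
        push_neg at hcon
        have : Real.cos (π * x) ≥ 0 := by
          apply Real.cos_nonneg_of_mem_Icc
          constructor <;> nlinarith
        linarith
      have hu0 : 0 < π * (1 - x) := by positivity
      have htan := Real.lt_tan hu0 hu1
      have hcosu : 0 < Real.cos (π * (1 - x)) := by
        apply Real.cos_pos_of_mem_Ioo
        constructor <;> nlinarith
      rw [Real.tan_eq_sin_div_cos, lt_div_iff₀ hcosu] at htan
      have hsin_eq : Real.sin (π * (1 - x)) = Real.sin (π * x) := by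
        rw [show π * (1 - x) = π - π * x by ring, Real.sin_pi_sub]
      have hcos_eq : Real.cos (π * (1 - x)) = -Real.cos (π * x) := by
        rw [show π * (1 - x) = π - π * x by ring, Real.cos_pi_sub]
      rw [hsin_eq, hcos_eq] at htan
      rw [hcos_eq] at hcosu
      -- htan : π * (1-x) * (-cos (π x)) < sin (π x)
      nlinarith [mul_pos hu0 hcosu, h1]
  have hexpr : -(g x) = (x * (π * (1 - x)) * Real.cos (π * x) + Real.sin (π * x))
      / (π * (1 - x) * Real.sin (π * x)) := by
    unfold g
    rw [Real.cot_eq_cos_div_sin]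
    field_simp
    ring_nf
    rw [mul_inv_cancel₀ (by rw [mul_comm]; exact hs.ne')]
    ring
  rw [hexpr]
  positivity

lemma tendsto_mul_log_right : Tendsto (fun x : ℝ => x * Real.log x) (𝓝[≥] (0:ℝ)) (𝓝 0) := by
  have h : Tendsto (fun x : ℝ => x * Real.log x) (𝓝[>] (0:ℝ)) (𝓝 0) := by
    have h2 := tendsto_log_mul_rpow_nhdsGT_zero (r := 1) one_pos
    apply h2.congr'
    filter_upwards [self_mem_nhdsWithin] with x _
    rw [Real.rpow_one, mul_comm]
  rw [← Set.Ioi_insert, nhdsWithin_insert, Filter.tendsto_sup]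
  exact ⟨by simpa using tendsto_pure_nhds (fun x : ℝ => x * Real.log x) 0, h⟩

lemma G_cont : ContinuousOn G (Icc 0 1) := by
  intro x hx
  rcases eq_or_ne x 0 with rfl | hx0
  · -- continuity at 0
    have hT : Tendsto (fun x : ℝ => x * Real.log (Real.sin (π*x) / (π*(1-x))))
        (𝓝[Icc (0:ℝ) 1] 0) (𝓝 0) := by
      have hxlogx : Tendsto (fun x : ℝ => x * Real.log x) (𝓝[Icc (0:ℝ) 1] 0) (𝓝 0) :=
        tendsto_mul_log_right.mono_left (nhdsWithin_mono 0 Icc_subset_Ici_self)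
      have hcont1 : Tendsto (fun x : ℝ => x * Real.log 2) (𝓝[Icc (0:ℝ) 1] 0) (𝓝 0) := by
        have hc : Continuous fun x : ℝ => x * Real.log 2 := by fun_prop
        simpa using (hc.tendsto 0).mono_left nhdsWithin_le_nhds
      have hcont2 : Tendsto (fun x : ℝ => x * Real.log (π*(1-x))) (𝓝[Icc (0:ℝ) 1] 0) (𝓝 0) := by
        have hc : ContinuousAt (fun x : ℝ => x * Real.log (π*(1-x))) 0 := by
          apply ContinuousAt.mul continuousAt_id
          apply ContinuousAt.log (by fun_prop)
          simpa using Real.pi_ne_zero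
        simpa using hc.tendsto.mono_left nhdsWithin_le_nhds
      have hlow : Tendsto (fun x : ℝ => x * Real.log 2 + x * Real.log x - x * Real.log (π*(1-x)))
          (𝓝[Icc (0:ℝ) 1] 0) (𝓝 0) := by
        simpa using (hcont1.add hxlogx).sub hcont2
      have hup : Tendsto (fun x : ℝ => -(x * Real.log (π*(1-x)))) (𝓝[Icc (0:ℝ) 1] 0) (𝓝 0) := by
        simpa using hcont2.neg
      have hev : Icc (0:ℝ) 1 ∩ Iio (1/2) ∈ 𝓝[Icc (0:ℝ) 1] 0 :=
        inter_mem self_mem_nhdsWithin (nhdsWithin_le_nhds (Iio_mem_nhds (by norm_num)))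
      apply tendsto_of_tendsto_of_tendsto_of_le_of_le' hlow hup
      · filter_upwards [hev] with x hx
        obtain ⟨⟨hx0, _⟩, hx2⟩ := hx
        rw [mem_Iio] at hx2
        rcases eq_or_lt_of_le hx0 with rfl | hx0'
        · simp
        · have h1x : (0:ℝ) < 1 - x := by linarith
          have hs : 0 < Real.sin (π*x) := sin_pi_mul_pos hx0' (by linarith)
          have hb : 2*x ≤ Real.sin (π*x) := two_mul_le_sin hx0 hx2.le
          have hlog : Real.log (2*x) - Real.log (π*(1-x))
              ≤ Real.log (Real.sin (π*x)/(π*(1-x))) := by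
            rw [Real.log_div hs.ne' (by positivity)]
            have := Real.log_le_log (by linarith : (0:ℝ) < 2*x) hb
            linarith
          calc x * Real.log 2 + x * Real.log x - x * Real.log (π*(1-x))
              = x * (Real.log (2*x) - Real.log (π*(1-x))) := by
                rw [Real.log_mul two_ne_zero hx0'.ne']; ring
            _ ≤ x * Real.log (Real.sin (π*x)/(π*(1-x))) :=
                mul_le_mul_of_nonneg_left hlog hx0
      · filter_upwards [hev] with x hx
        obtain ⟨⟨hx0, _⟩, hx2⟩ := hx
        rw [mem_Iio] at hx2
        rcases eq_or_lt_of_le hx0 with rfl | hx0'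
        · simp
        · have h1x : (0:ℝ) < 1 - x := by linarith
          have hs : 0 < Real.sin (π*x) := sin_pi_mul_pos hx0' (by linarith)
          have hlog : Real.log (Real.sin (π*x)/(π*(1-x))) ≤ -Real.log (π*(1-x)) := by
            rw [Real.log_div hs.ne' (by positivity)]
            have := Real.log_le_log hs (Real.sin_le_one (π*x))
            simp only [Real.log_one] at this
            linarith
          calc x * Real.log (Real.sin (π*x)/(π*(1-x)))
              ≤ x * -Real.log (π*(1-x)) := mul_le_mul_of_nonneg_left hlog hx0
            _ = -(x * Real.log (π*(1-x))) := by ring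
    have hlogpi : Tendsto (fun x : ℝ => x * Real.log π) (𝓝[Icc (0:ℝ) 1] 0) (𝓝 0) := by
      have hc : Continuous fun x : ℝ => x * Real.log π := by fun_prop
      simpa using (hc.tendsto 0).mono_left nhdsWithin_le_nhds
    have h3 : Tendsto (fun x : ℝ => (x-1) * Real.log (1-x)) (𝓝[Icc (0:ℝ) 1] 0) (𝓝 0) := by
      have hc : ContinuousAt (fun x : ℝ => (x-1) * Real.log (1-x)) 0 := by
        apply ContinuousAt.mul (by fun_prop)
        apply ContinuousAt.log (by fun_prop)
        norm_num
      simpa using hc.tendsto.mono_left nhdsWithin_le_nhds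
    have hLL : Tendsto LL (𝓝[Icc (0:ℝ) 1] 0) (𝓝 0) := by
      have := LL_cont 0 ⟨le_rfl, zero_le_one⟩
      simpa [ContinuousWithinAt, LL, intervalIntegral.integral_same] using this
    show Tendsto G (𝓝[Icc (0:ℝ) 1] 0) (𝓝 (G 0))
    have hG0 : G 0 = 0 := by simp [G, LL]
    rw [hG0]
    have h := (((hT.add hlogpi).add h3).div_const π).sub (hLL.div_const π)
    simpa using Tendsto.congr (f₂ := G) (fun x => rfl) h
  · rcases eq_or_ne x 1 with rfl | hx1
    · -- continuity at 1
      rw [← continuousWithinAt_diff_self]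
      show Tendsto G (𝓝[Icc (0:ℝ) 1 \ {1}] 1) (𝓝 (G 1))
      have hmap : Tendsto (fun x : ℝ => 1 - x) (𝓝[Icc (0:ℝ) 1 \ {1}] 1) (𝓝[>] (0:ℝ)) := by
        apply tendsto_nhdsWithin_of_tendsto_nhds_of_eventually_within
        · have : Tendsto (fun x : ℝ => 1 - x) (𝓝 1) (𝓝 0) := by
            have hc : Continuous fun x : ℝ => 1 - x := by fun_prop
            simpa using hc.tendsto 1
          exact this.mono_left nhdsWithin_le_nhds
        · filter_upwards [self_mem_nhdsWithin] with x hx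
          have : x < 1 := lt_of_le_of_ne hx.1.2 (by simpa using hx.2)
          simpa using this
      have hr : Tendsto (fun x : ℝ => Real.sin (π*x) / (π*(1-x)))
          (𝓝[Icc (0:ℝ) 1 \ {1}] 1) (𝓝 1) := by
        have hslope : Tendsto (fun u : ℝ => Real.sin (π*u) / (π*u)) (𝓝[>] (0:ℝ)) (𝓝 1) := by
          have hd : HasDerivAt (fun u : ℝ => Real.sin (π*u)) π 0 := by
            have := (Real.hasDerivAt_sin (π*0)).comp 0 ((hasDerivAt_id 0).const_mul π)
            simpa [Function.comp_def] using this
          rw [hasDerivAt_iff_tendsto_slope] at hd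
          have hd2 : Tendsto (fun u : ℝ => Real.sin (π*u) / u / π) (𝓝[≠] (0:ℝ)) (𝓝 (π/π)) := by
            apply Tendsto.div_const
            apply hd.congr'
            filter_upwards [self_mem_nhdsWithin] with u _
            simp [slope_def_field, div_eq_mul_inv]
          rw [div_self Real.pi_ne_zero] at hd2
          have : Tendsto (fun u : ℝ => Real.sin (π*u) / u / π) (𝓝[>] (0:ℝ)) (𝓝 1) :=
            hd2.mono_left (nhdsWithin_mono 0 (fun u hu => ne_of_gt hu))
          apply this.congr
          intro u
          rw [div_div, mul_comm u π]
        have := hslope.comp hmap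
        apply this.congr
        intro x
        simp only [Function.comp_apply]
        rw [show π * (1-x) = π - π*x by ring, Real.sin_pi_sub]
      have hT : Tendsto (fun x : ℝ => x * Real.log (Real.sin (π*x) / (π*(1-x))))
          (𝓝[Icc (0:ℝ) 1 \ {1}] 1) (𝓝 0) := by
        have hlogr : Tendsto (fun x : ℝ => Real.log (Real.sin (π*x) / (π*(1-x))))
            (𝓝[Icc (0:ℝ) 1 \ {1}] 1) (𝓝 0) := by
          have := (Real.continuousAt_log one_ne_zero).tendsto.comp hr
          simpa [Function.comp_def] using this
        have hid : Tendsto (fun x : ℝ => x) (𝓝[Icc (0:ℝ) 1 \ {1}] 1) (𝓝 1) :=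
          tendsto_id.mono_left nhdsWithin_le_nhds
        simpa using hid.mul hlogr
      have hlogpi : Tendsto (fun x : ℝ => x * Real.log π)
          (𝓝[Icc (0:ℝ) 1 \ {1}] 1) (𝓝 (Real.log π)) := by
        have hc : Continuous fun x : ℝ => x * Real.log π := by fun_prop
        simpa using (hc.tendsto 1).mono_left nhdsWithin_le_nhds
      have h3 : Tendsto (fun x : ℝ => (x-1) * Real.log (1-x))
          (𝓝[Icc (0:ℝ) 1 \ {1}] 1) (𝓝 0) := by
        have := tendsto_mul_log_right.comp
          (hmap.mono_right (nhdsWithin_mono 0 Ioi_subset_Ici_self))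
        have h2 : Tendsto (fun x : ℝ => (1-x) * Real.log (1-x))
            (𝓝[Icc (0:ℝ) 1 \ {1}] 1) (𝓝 0) := this
        have := h2.neg
        simp only [neg_zero] at this
        apply this.congr
        intro x; ring
      have hLL : Tendsto LL (𝓝[Icc (0:ℝ) 1 \ {1}] 1) (𝓝 (LL 1)) := by
        have := LL_cont 1 ⟨zero_le_one, le_rfl⟩
        exact this.tendsto.mono_left (nhdsWithin_mono 1 diff_subset)
      have hG1 : G 1 = ((0 + Real.log π + 0)/π - LL 1 / π) := by
        simp [G, Real.sin_pi]
      rw [hG1]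
      have h := (((hT.add hlogpi).add h3).div_const π).sub (hLL.div_const π)
      simpa using Tendsto.congr (f₂ := G) (fun x => rfl) h
    · have hxI : x ∈ Ioo (0:ℝ) 1 :=
        ⟨lt_of_le_of_ne hx.1 (Ne.symm hx0), lt_of_le_of_ne hx.2 hx1⟩
      exact (G_deriv hxI).continuousAt.continuousWithinAt

/-- The integral `∫₀¹ g(x) dx` converges and equals `−ln(2π)/π`. -/
theorem integral_g :
    IntervalIntegrable g MeasureTheory.volume 0 1 ∧
    ∫ x in (0 : ℝ)..1, g x = -Real.log (2 * π) / π := by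
  have hderiv : ∀ x ∈ Ioo (0:ℝ) 1, HasDerivAt G (-(g x)) x := fun x hx => G_deriv hx
  have hnonneg : ∀ x ∈ Ioo (0:ℝ) 1, 0 ≤ -(g x) := fun x hx => G_deriv_nonneg hx
  have hint : IntervalIntegrable (fun x => -(g x)) volume 0 1 := by
    apply intervalIntegrable_deriv_of_nonneg (g := G)
    · simpa [uIcc_of_le zero_le_one] using G_cont
    · simpa using hderiv
    · simpa using hnonneg
  have hgint : IntervalIntegrable g volume 0 1 := by
    have h2 := hint.neg
    have he : (-fun x => -g x) = g := by funext x; simp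
    rwa [he] at h2
  refine ⟨hgint, ?_⟩
  have heval := intervalIntegral.integral_eq_sub_of_hasDerivAt_of_le zero_le_one
    G_cont hderiv hint
  have hG1 : G 1 = Real.log π / π - LL 1 / π := by
    simp [G, Real.sin_pi]
  have hLL1 : LL 1 = -Real.log 2 := I_eq
  have hG0 : G 0 = 0 := by simp [G, LL]
  rw [intervalIntegral.integral_neg] at heval
  have : ∫ x in (0:ℝ)..1, g x = -(G 1 - G 0) := by linarith
  rw [this, hG1, hG0, hLL1, Real.log_mul two_ne_zero Real.pi_ne_zero]
  ring
end

section
/- As x → 0⁺, (g(x) − (−2/π))/x → −1/π; that is, the continuous extension of g to [0,1] (with g(0) = −2/π) is differentiable from the right at 0 with derivative g′(0) = −1/π. -/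
open Real Filter Topology

/-- Key limit: `1/t − cot t → 0` as `t → 0⁺`. -/
lemma cot_sub_inv_tendsto : Tendsto (fun t : ℝ => 1 / t - Real.cot t) (𝓝[>] (0 : ℝ)) (𝓝 0) := by
  have hmem : Set.Ioo (0 : ℝ) 1 ∈ 𝓝[>] (0 : ℝ) :=
    Ioo_mem_nhdsGT_of_mem (by norm_num : (0 : ℝ) ∈ Set.Ico (0 : ℝ) 1)
  have hlow : ∀ᶠ t in 𝓝[>] (0 : ℝ), (0 : ℝ) ≤ 1 / t - Real.cot t := by
    filter_upwards [hmem] with t ht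
    obtain ⟨ht0, ht1⟩ := ht
    have hπ2 : t < π / 2 := lt_of_lt_of_le ht1 (by nlinarith [Real.pi_gt_three])
    have hs : 0 < Real.sin t := Real.sin_pos_of_pos_of_lt_pi ht0 (by nlinarith [Real.pi_gt_three])
    have hc : 0 < Real.cos t := Real.cos_pos_of_mem_Ioo ⟨by linarith, hπ2⟩
    have htan := Real.lt_tan ht0 hπ2
    rw [Real.tan_eq_sin_div_cos, lt_div_iff₀ hc] at htan
    rw [Real.cot_eq_cos_div_sin, sub_nonneg, div_le_div_iff₀ hs ht0]
    linarith
  have hhigh : ∀ᶠ t in 𝓝[>] (0 : ℝ), 1 / t - Real.cot t ≤ t := by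
    filter_upwards [hmem] with t ht
    obtain ⟨ht0, ht1⟩ := ht
    have hs : 0 < Real.sin t := Real.sin_pos_of_pos_of_lt_pi ht0 (by nlinarith [Real.pi_gt_three])
    have hsin_lb : t - t ^ 3 / 4 < Real.sin t := by
      have := Real.sin_gt_sub_cube ht0; nlinarith [pow_pos ht0 3]
    have hsin_ub : Real.sin t < t := Real.sin_lt ht0
    have hcos_lb : 1 - t ^ 2 / 2 ≤ Real.cos t := Real.one_sub_sq_div_two_le_cos
    rw [Real.cot_eq_cos_div_sin, div_sub_div _ _ ht0.ne' hs.ne',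
      div_le_iff₀ (mul_pos ht0 hs)]
    nlinarith [mul_le_mul_of_nonneg_left hcos_lb ht0.le,
      mul_lt_mul_of_pos_left hsin_lb (mul_pos ht0 ht0),
      pow_le_pow_of_le_one ht0.le ht1.le (by norm_num : 3 ≤ 5)]
  have h0 : Tendsto (fun _ : ℝ => (0 : ℝ)) (𝓝[>] (0 : ℝ)) (𝓝 0) := tendsto_const_nhds
  have hid : Tendsto (fun t : ℝ => t) (𝓝[>] (0 : ℝ)) (𝓝 0) :=
    tendsto_id.mono_left nhdsWithin_le_nhds
  exact tendsto_of_tendsto_of_tendsto_of_le_of_le' h0 hid hlow hhigh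

/-- `(g(x) − (−2/π))/x → −1/π` as `x → 0⁺`, i.e. `g′(0) = −1/π` for the
continuous extension of `g` (with `g(0) = −2/π`). -/
theorem g_deriv_at_zero :
    Tendsto (fun x : ℝ => (g x - (-2 / π)) / x) (𝓝[>] (0 : ℝ)) (𝓝 (-1 / π)) := by
  have hπ : (0 : ℝ) < π := Real.pi_pos
  -- the map x ↦ π x sends 𝓝[>]0 to 𝓝[>]0
  have hcomp : Tendsto (fun x : ℝ => π * x) (𝓝[>] (0 : ℝ)) (𝓝[>] (0 : ℝ)) := by
    apply tendsto_nhdsWithin_of_tendsto_nhds_of_eventually_within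
    · have : Tendsto (fun x : ℝ => π * x) (𝓝 (0 : ℝ)) (𝓝 (π * 0)) :=
        (continuous_const.mul continuous_id).tendsto 0
      simpa using this.mono_left nhdsWithin_le_nhds
    · filter_upwards [self_mem_nhdsWithin] with x hx
      exact mul_pos hπ hx
  have h1 : Tendsto (fun x : ℝ => 1 / (π * x) - Real.cot (π * x)) (𝓝[>] (0 : ℝ)) (𝓝 0) :=
    cot_sub_inv_tendsto.comp hcomp
  have h2 : Tendsto (fun x : ℝ => -1 / (π * (1 - x))) (𝓝[>] (0 : ℝ)) (𝓝 (-1 / π)) := by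
    have hc : ContinuousAt (fun x : ℝ => -1 / (π * (1 - x))) 0 := by
      apply ContinuousAt.div
      · fun_prop
      · fun_prop
      · simp [hπ.ne']
    have h := hc.tendsto.mono_left (nhdsWithin_le_nhds (s := Set.Ioi (0:ℝ)))
    simpa using h
  have hsum := h1.add h2
  rw [zero_add] at hsum
  refine hsum.congr' ?_
  filter_upwards [Ioo_mem_nhdsGT_of_mem (by norm_num : (0 : ℝ) ∈ Set.Ico (0 : ℝ) 1)] with x hx
  obtain ⟨hx0, hx1⟩ := hx
  have h1x : (1 : ℝ) - x ≠ 0 := by linarith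
  simp only [g]
  field_simp
  ring
end

section
/- As x → 1⁻, (g(x) − (−1/π))/(x − 1) → π/3; that is, the continuous extension of g to [0,1] (with g(1) = −1/π) is differentiable from the left at 1 with derivative g′(1) = π/3. -/
open Real Filter Topology

private lemma hd1 (x : ℝ) :
    HasDerivAt (fun u : ℝ => u^3/3 - (Real.sin u - u * Real.cos u)) (x * (x - Real.sin x)) x := by
  have h1 : HasDerivAt (fun u : ℝ => u^3) (3 * x^2) x := by simpa using hasDerivAt_pow 3 x
  have h2 : HasDerivAt (fun u : ℝ => u * Real.cos u) (1 * Real.cos x + x * (-Real.sin x)) x :=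
    (hasDerivAt_id x).mul (Real.hasDerivAt_cos x)
  have := (h1.div_const 3).sub ((Real.hasDerivAt_sin x).sub h2)
  refine this.congr_deriv ?_
  ring

private lemma hd2 (x : ℝ) :
    HasDerivAt (fun u : ℝ => (Real.sin u - u * Real.cos u) - u^3/3 + u^5/20)
      (x * (Real.sin x - (x - x^3/4)) + x^3 * (x/4 - x/4)) x := by
  have h1 : HasDerivAt (fun u : ℝ => u^3) (3 * x^2) x := by simpa using hasDerivAt_pow 3 x
  have h15 : HasDerivAt (fun u : ℝ => u^5) (5 * x^4) x := by simpa using hasDerivAt_pow 5 x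
  have h2 : HasDerivAt (fun u : ℝ => u * Real.cos u) (1 * Real.cos x + x * (-Real.sin x)) x :=
    (hasDerivAt_id x).mul (Real.hasDerivAt_cos x)
  have := (((Real.hasDerivAt_sin x).sub h2).sub (h1.div_const 3)).add (h15.div_const 20)
  refine this.congr_deriv ?_
  ring

lemma aux_le {u : ℝ} (hu : 0 ≤ u) : Real.sin u - u * Real.cos u ≤ u^3/3 := by
  set f := fun u : ℝ => u^3/3 - (Real.sin u - u * Real.cos u) with hf
  have hmono : MonotoneOn f (Set.Ici 0) := by
    apply monotoneOn_of_deriv_nonneg (convex_Ici 0)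
      (fun x _ => (hd1 x).continuousAt.continuousWithinAt)
      (fun x _ => ((hd1 x).differentiableAt).differentiableWithinAt)
    intro x hx
    rw [(hd1 x).deriv]
    rw [interior_Ici] at hx
    have h := Real.sin_le (le_of_lt hx)
    exact mul_nonneg (le_of_lt hx) (by linarith)
  have h0 : f 0 = 0 := by simp [hf]
  have := hmono (Set.self_mem_Ici) (Set.mem_Ici.2 hu) hu
  rw [h0] at this
  simp only [hf] at this
  linarith

lemma aux_ge {u : ℝ} (hu : 0 ≤ u) (hu1 : u ≤ 1) :
    u^3/3 - u^5/20 ≤ Real.sin u - u * Real.cos u := by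
  set f := fun u : ℝ => (Real.sin u - u * Real.cos u) - u^3/3 + u^5/20 with hf
  have hmono : MonotoneOn f (Set.Icc 0 1) := by
    apply monotoneOn_of_deriv_nonneg (convex_Icc 0 1)
      (fun x _ => (hd2 x).continuousAt.continuousWithinAt)
      (fun x _ => ((hd2 x).differentiableAt).differentiableWithinAt)
    intro x hx
    rw [(hd2 x).deriv]
    rw [interior_Icc] at hx
    obtain ⟨hx0, hx1⟩ := hx
    have h := Real.sin_gt_sub_cube hx0
    have : (0:ℝ) ≤ x * (Real.sin x - (x - x^3/4)) := mul_nonneg (le_of_lt hx0) (by nlinarith [pow_pos hx0 3])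
    nlinarith
  have h0 : f 0 = 0 := by simp [hf]
  have := hmono (Set.left_mem_Icc.2 zero_le_one) (Set.mem_Icc.2 ⟨hu, hu1⟩) hu
  rw [h0] at this
  simp only [hf] at this
  linarith

lemma lim_cube : Tendsto (fun u : ℝ => (Real.sin u - u * Real.cos u)/u^3) (𝓝[>] 0) (𝓝 (1/3)) := by
  have hlow : Tendsto (fun u : ℝ => 1/3 - u^2/20) (𝓝[>] (0:ℝ)) (𝓝 (1/3)) := by
    have hc : Continuous (fun u : ℝ => 1/3 - u^2/20) := by continuity
    have : Tendsto (fun u : ℝ => 1/3 - u^2/20) (𝓝 (0:ℝ)) (𝓝 (1/3)) := by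
      simpa using hc.tendsto 0
    exact this.mono_left nhdsWithin_le_nhds
  apply tendsto_of_tendsto_of_tendsto_of_le_of_le' hlow tendsto_const_nhds
  · filter_upwards [Ioc_mem_nhdsGT_of_mem (by norm_num : (0:ℝ) ∈ Set.Ico 0 1)] with u hu
    obtain ⟨hu0, hu1⟩ := hu
    have h3 : (0:ℝ) < u^3 := by positivity
    rw [le_div_iff₀ h3]
    have := aux_ge (le_of_lt hu0) hu1
    nlinarith
  · filter_upwards [self_mem_nhdsWithin] with u hu
    have hu0 : (0:ℝ) < u := hu
    have h3 : (0:ℝ) < u^3 := by positivity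
    rw [div_le_iff₀ h3]
    have := aux_le (le_of_lt hu0)
    nlinarith

lemma lim_sin_div : Tendsto (fun u : ℝ => Real.sin u / u) (𝓝[>] 0) (𝓝 1) := by
  have h := hasDerivAt_iff_tendsto_slope.1 (Real.hasDerivAt_sin 0)
  rw [Real.cos_zero] at h
  have h2 : Tendsto (slope Real.sin 0) (𝓝[>] (0:ℝ)) (𝓝 1) :=
    h.mono_left (nhdsWithin_mono _ (fun x hx => ne_of_gt hx))
  refine h2.congr (fun u => ?_)
  simp [slope_def_field]

/-- `(g(x) − (−1/π))/(x−1) → π/3` as `x → 1⁻`, i.e. `g′(1) = π/3` for the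
continuous extension of `g` (with `g(1) = −1/π`). -/
theorem g_deriv_at_one :
    Tendsto (fun x : ℝ => (g x - (-1 / π)) / (x - 1)) (𝓝[<] (1 : ℝ)) (𝓝 (π / 3)) := by
  have hπ : (0:ℝ) < π := Real.pi_pos
  -- maps
  have hmap : Tendsto (fun x : ℝ => 1 - x) (𝓝[<] (1:ℝ)) (𝓝[>] (0:ℝ)) := by
    apply tendsto_nhdsWithin_of_tendsto_nhds_of_eventually_within
    · have hc : Continuous (fun x : ℝ => 1 - x) := by continuity
      have : Tendsto (fun x : ℝ => 1 - x) (𝓝 1) (𝓝 0) := by simpa using hc.tendsto (1:ℝ)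
      exact this.mono_left nhdsWithin_le_nhds
    · filter_upwards [self_mem_nhdsWithin] with x hx
      simp only [Set.mem_Iio] at hx
      simp [Set.mem_Ioi]; linarith
  have hmap2 : Tendsto (fun t : ℝ => π * t) (𝓝[>] (0:ℝ)) (𝓝[>] (0:ℝ)) := by
    apply tendsto_nhdsWithin_of_tendsto_nhds_of_eventually_within
    · have hc : Continuous (fun t : ℝ => π * t) := by continuity
      have : Tendsto (fun t : ℝ => π * t) (𝓝 0) (𝓝 0) := by simpa using hc.tendsto (0:ℝ)
      exact this.mono_left nhdsWithin_le_nhds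
    · filter_upwards [self_mem_nhdsWithin] with t ht
      exact mul_pos hπ ht
  -- component limits on 𝓝[>] 0
  have L1 : Tendsto (fun t : ℝ => 1 - t) (𝓝[>] (0:ℝ)) (𝓝 1) := by
    have hc : Continuous (fun t : ℝ => 1 - t) := by continuity
    have : Tendsto (fun t : ℝ => 1 - t) (𝓝 (0:ℝ)) (𝓝 1) := by simpa using hc.tendsto (0:ℝ)
    exact this.mono_left nhdsWithin_le_nhds
  have L2 : Tendsto (fun t : ℝ =>
      (Real.sin (π*t) - (π*t) * Real.cos (π*t)) / (π*t)^3) (𝓝[>] (0:ℝ)) (𝓝 (1/3)) :=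
    lim_cube.comp hmap2
  have L3 : Tendsto (fun t : ℝ => (π*t) / Real.sin (π*t)) (𝓝[>] (0:ℝ)) (𝓝 1) := by
    have h := ((lim_sin_div.comp hmap2).inv₀ one_ne_zero)
    simp only [inv_one] at h
    refine h.congr (fun t => ?_)
    simp [inv_div]
  have hF : Tendsto (fun t : ℝ => ((1 - t) * π *
      ((Real.sin (π*t) - (π*t) * Real.cos (π*t)) / (π*t)^3)) * ((π*t) / Real.sin (π*t)))
      (𝓝[>] (0:ℝ)) (𝓝 (π/3)) := by
    have hcπ : Tendsto (fun _ : ℝ => π) (𝓝[>] (0:ℝ)) (𝓝 π) := tendsto_const_nhds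
    have := ((L1.mul hcπ).mul L2).mul L3
    convert this using 2
    ring
  have hcomp := hF.comp hmap
  refine hcomp.congr' ?_
  filter_upwards [Ioo_mem_nhdsLT_of_mem (by norm_num : (1:ℝ) ∈ Set.Ioc (1/2) 1)] with x hx
  obtain ⟨hx0, hx1⟩ := hx
  have ht0 : 0 < 1 - x := by linarith
  have ht1 : 1 - x < 1 := by linarith
  have hs : 0 < Real.sin (π * (1 - x)) :=
    Real.sin_pos_of_pos_of_lt_pi (by positivity) (by nlinarith)
  have hsx : Real.sin (π * x) = Real.sin (π * (1 - x)) := by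
    rw [show π * x = π - π * (1 - x) by ring, Real.sin_pi_sub]
  have hcx : Real.cos (π * x) = -Real.cos (π * (1 - x)) := by
    rw [show π * x = π - π * (1 - x) by ring, Real.cos_pi_sub]
  show ((1 - (1-x)) * π *
      ((Real.sin (π*(1-x)) - (π*(1-x)) * Real.cos (π*(1-x))) / (π*(1-x))^3)) *
      ((π*(1-x)) / Real.sin (π*(1-x))) = (g x - (-1 / π)) / (x - 1)
  rw [g, Real.cot_eq_cos_div_sin, hsx, hcx]
  have h1 : (1 - x) ≠ 0 := ne_of_gt ht0
  have h2 : Real.sin (π * (1 - x)) ≠ 0 := ne_of_gt hs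
  have h3 : x - 1 ≠ 0 := by intro h; apply h1; linarith
  have h2' : Real.sin ((1 - x) * π) ≠ 0 := by rwa [mul_comm]
  field_simp
  ring
end

section
/- As x → 0⁺, (g(x) − (−2/π − x/π + (π/3 − 1/π)x²))/x³ → −1/π; that is, the third-order Taylor expansion of g at 0 is g(x) = −2/π − x/π + (π/3 − 1/π)x² − x³/π + o(x³), so the third derivative of the smooth extension of g at 0 is g′′′(0) = −6/π. -/
open Real Filter Topology

lemma Es_bound {t : ℝ} (h0 : 0 ≤ t) (h1 : t ≤ 1) :
    |Real.sin t - (t - t^3/6)| ≤ 5/96 * t^5 := by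
  have key := norm_image_sub_le_of_norm_deriv_le_segment'
    (f := fun s => Real.sin s - (s - s^3/6)) (f' := fun s => Real.cos s - (1 - s^2/2))
    (a := 0) (b := t) (C := 5/96 * t^4)
    (fun s hs => by
      have : HasDerivAt (fun s : ℝ => Real.sin s - (s - s^3/6)) (Real.cos s - (1 - s^2/2)) s := by
        have hA := (Real.hasDerivAt_sin s)
        have h2 : HasDerivAt (fun s : ℝ => s - s^3/6) (1 - s^2/2) s := by
          have := ((hasDerivAt_pow 3 s).div_const 6)
          have h3 : HasDerivAt (fun s : ℝ => s - s^3/6) _ s := (hasDerivAt_id s).sub this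
          convert h3 using 1
          ring
        exact hA.sub h2
      exact this.hasDerivWithinAt)
    (fun s hs => by
      have hb := Real.cos_bound (x := s) (by rw [abs_of_nonneg hs.1]; exact hs.2.le.trans h1)
      rw [Real.norm_eq_abs]
      calc |Real.cos s - (1 - s^2/2)| ≤ |s|^4 * (5/96) := hb
        _ ≤ 5/96 * t^4 := by
            rw [abs_of_nonneg hs.1]
            nlinarith [pow_le_pow_left₀ hs.1 hs.2.le 4])
    t (by constructor <;> [exact h0; exact le_refl t])
  simpa [Real.norm_eq_abs, pow_succ] using key.trans_eq (by ring)

lemma N_bound {t : ℝ} (h0 : 0 ≤ t) (h1 : t ≤ 1) :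
    |Real.sin t - t * Real.cos t - t^2/3 * Real.sin t| ≤ t^5 := by
  set Es := Real.sin t - (t - t^3/6) with hEs
  set Ec := Real.cos t - (1 - t^2/2) with hEc
  have hbs : |Es| ≤ 5/96 * t^5 := Es_bound h0 h1
  have hbc : |Ec| ≤ 5/96 * t^4 := by
    have := Real.cos_bound (x := t) (by rw [abs_of_nonneg h0]; exact h1)
    rw [abs_of_nonneg h0] at this; linarith
  have hid : Real.sin t - t * Real.cos t - t^2/3 * Real.sin t
      = Es * (1 - t^2/3) - t * Ec + t^5/18 := by
    rw [hEs, hEc]; ring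
  rw [hid]
  have h2 : |Es * (1 - t^2/3)| ≤ 5/96 * t^5 := by
    rw [abs_mul]
    have : |1 - t^2/3| ≤ 1 := by rw [abs_le]; constructor <;> nlinarith
    calc |Es| * |1 - t^2/3| ≤ (5/96 * t^5) * 1 :=
          mul_le_mul hbs this (abs_nonneg _) (by positivity)
      _ = 5/96 * t^5 := by ring
  have h3 : |t * Ec| ≤ 5/96 * t^5 := by
    rw [abs_mul, abs_of_nonneg h0]
    calc t * |Ec| ≤ t * (5/96 * t^4) := by
          exact mul_le_mul_of_nonneg_left hbc h0
      _ = 5/96 * t^5 := by ring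
  calc |Es * (1 - t^2/3) - t * Ec + t^5/18|
      ≤ |Es * (1 - t^2/3) - t * Ec| + |t^5/18| := abs_add_le _ _
    _ ≤ (|Es * (1 - t^2/3)| + |t * Ec|) + |t^5/18| := by
        gcongr; exact abs_sub _ _
    _ ≤ (5/96 * t^5 + 5/96 * t^5) + t^5/18 := by
        have : |t^5/18| = t^5/18 := abs_of_nonneg (by positivity)
        rw [this]; gcongr
    _ ≤ t^5 := by nlinarith [pow_nonneg h0 5]

/-- Third-order Taylor expansion of `g` at `0`:
`g(x) = −2/π − x/π + (π/3 − 1/π)x² − x³/π + o(x³)`, i.e.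
`(g(x) − (−2/π − x/π + (π/3 − 1/π)x²))/x³ → −1/π` as `x → 0⁺`
(so that `g′′′(0) = −6/π`). -/
theorem g_third_order_at_zero :
    Tendsto (fun x : ℝ =>
        (g x - (-2 / π - x / π + (π / 3 - 1 / π) * x ^ 2)) / x ^ 3)
      (𝓝[>] (0 : ℝ)) (𝓝 (-1 / π)) := by
  have hπ : (0:ℝ) < π := Real.pi_pos
  set N : ℝ → ℝ := fun t => Real.sin t - t * Real.cos t - t^2/3 * Real.sin t with hN
  set f₁ : ℝ → ℝ := fun x => N (π * x) / (π * x^3 * Real.sin (π * x)) with hf₁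
  set f₂ : ℝ → ℝ := fun x => -1 / (π * (1 - x)) with hf₂
  have heq : ∀ᶠ x in 𝓝[>] (0:ℝ),
      (g x - (-2 / π - x / π + (π / 3 - 1 / π) * x ^ 2)) / x ^ 3 = f₁ x + f₂ x := by
    filter_upwards [Ioo_mem_nhdsGT_of_mem (by norm_num : (0:ℝ) ∈ Set.Ico (0:ℝ) 1)] with x hx
    have hx0 : (0:ℝ) < x := hx.1
    have hx1 : x < 1 := hx.2
    have hs : Real.sin (π * x) ≠ 0 := by
      have : 0 < Real.sin (π * x) := Real.sin_pos_of_pos_of_lt_pi (by positivity)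
        (by nlinarith)
      exact this.ne'
    have h1x : (1:ℝ) - x ≠ 0 := by linarith
    simp only [g, hf₁, hf₂, hN, Real.cot_eq_cos_div_sin]
    have hs' : Real.sin (x * π) ≠ 0 := by rwa [mul_comm]
    field_simp
    ring
  rw [tendsto_congr' heq]
  have ht2 : Tendsto f₂ (𝓝[>] (0:ℝ)) (𝓝 (-1/π)) := by
    have hc : ContinuousAt (fun x : ℝ => -1 / (π * (1 - x))) 0 := by
      apply ContinuousAt.div continuousAt_const
      · fun_prop
      · simp [hπ.ne']
    have := hc.tendsto.mono_left (nhdsWithin_le_nhds (s := Set.Ioi (0:ℝ)))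
    simpa using this
  have ht1 : Tendsto f₁ (𝓝[>] (0:ℝ)) (𝓝 0) := by
    rw [tendsto_zero_iff_abs_tendsto_zero]
    apply squeeze_zero' (Eventually.of_forall fun x => abs_nonneg _)
    · show ∀ᶠ x in 𝓝[>] (0:ℝ), |f₁ x| ≤ π^4/2 * x
      filter_upwards [Ioo_mem_nhdsGT_of_mem
        (by constructor <;> positivity : (0:ℝ) ∈ Set.Ico (0:ℝ) (1/π))] with x hx
      have hx0 : (0:ℝ) < x := hx.1
      have hx1 : π * x ≤ 1 := by
        have := (lt_div_iff₀ hπ).mp hx.2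
        rw [mul_comm]; linarith
      have hsin : 2 * x ≤ Real.sin (π * x) := by
        have h2pi : (2:ℝ) ≤ π := Real.two_le_pi
        have := Real.mul_le_sin (x := π * x) (by positivity) (by nlinarith)
        calc 2 * x = 2 / π * (π * x) := by field_simp
          _ ≤ Real.sin (π * x) := this
      have hsinpos : 0 < Real.sin (π * x) := lt_of_lt_of_le (by positivity) hsin
      have hden : 0 < π * x^3 * Real.sin (π * x) := by positivity
      have hNb : |N (π * x)| ≤ (π * x)^5 := N_bound (by positivity) hx1
      rw [hf₁, abs_div, abs_of_pos hden, div_le_iff₀ hden]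
      calc |N (π * x)| ≤ (π * x)^5 := hNb
        _ = π^4/2 * x * (π * x^3 * (2 * x)) := by ring
        _ ≤ π^4/2 * x * (π * x^3 * Real.sin (π * x)) := by gcongr
    · have hc : Tendsto (fun t : ℝ => π^4/2 * t) (𝓝 (0:ℝ)) (𝓝 (π^4/2 * 0)) :=
        (continuous_const.mul continuous_id).tendsto 0
      have := hc.mono_left (nhdsWithin_le_nhds (s := Set.Ioi (0:ℝ)))
      simpa using this
  have key := ht1.add ht2
  have hz : (-1/π : ℝ) = 0 + -1/π := by ring
  rw [hz]
  exact key
end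

section
/- As x → 1⁻, with t = 1 − x, (g(x) − (−1/π − (π/3)t + (π/3)t²))/t³ → −π³/45; that is, the third-order Taylor expansion of g at 1 in t = 1 − x is g(x) = −1/π − (π/3)t + (π/3)t² − (π³/45)t³ + o(t³), so the third derivative of the smooth extension of g at 1 is g′′′(1) = 2π³/15. -/
open Real Filter Topology
open Set


lemma lim_sin : Tendsto (fun t : ℝ => Real.sin (π*t)/t) (𝓝[>] (0:ℝ)) (𝓝 π) := by
  have h : HasDerivAt (fun t : ℝ => Real.sin (π*t)) π 0 := by
    have := (Real.hasDerivAt_sin (π*0)).comp 0 ((hasDerivAt_id (0:ℝ)).const_mul π)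
    simpa [Function.comp_def] using this
  have h2 := hasDerivAt_iff_tendsto_slope.mp h
  refine Tendsto.congr' ?_ (h2.mono_left (nhdsWithin_mono _ (fun x hx => ne_of_gt hx)))
  filter_upwards [self_mem_nhdsWithin] with t ht
  simp [slope_def_field]

lemma limM : Tendsto (fun t : ℝ => (π*t*Real.cos (π*t) - Real.sin (π*t))/t^3)
    (𝓝[>] (0:ℝ)) (𝓝 (-π^3/3)) := by
  apply HasDerivAt.lhopital_zero_right_on_Ioo (a := 0) (b := 1)
    (f' := fun t => -π^2*t*Real.sin (π*t)) (g' := fun t => 3*t^2) one_pos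
  · intro x _
    have h1 : HasDerivAt (fun t : ℝ => π*t) π x := by
      simpa using (hasDerivAt_id x).const_mul π
    have h2 : HasDerivAt (fun t : ℝ => Real.cos (π*t)) (-Real.sin (π*x)*π) x :=
      (Real.hasDerivAt_cos (π*x)).comp x h1
    have h3 : HasDerivAt (fun t : ℝ => Real.sin (π*t)) (Real.cos (π*x)*π) x :=
      (Real.hasDerivAt_sin (π*x)).comp x h1
    have := (h1.mul h2).sub h3
    exact this.congr_deriv (by ring)
  · intro x _
    simpa using hasDerivAt_pow 3 x
  · intro x hx
    have : (0:ℝ) < x := hx.1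
    positivity
  · have : ContinuousAt (fun t : ℝ => π*t*Real.cos (π*t) - Real.sin (π*t)) 0 := by fun_prop
    have h := this.tendsto.mono_left (nhdsWithin_le_nhds (s := Ioi (0:ℝ)))
    simpa using h
  · have h := ((continuous_pow 3).tendsto (0:ℝ)).mono_left
      (nhdsWithin_le_nhds (s := Ioi (0:ℝ)))
    simpa using h
  · have h := lim_sin.const_mul (-π^2/3)
    have h2 : -π^2/3*π = -π^3/3 := by ring
    rw [h2] at h
    refine Tendsto.congr' ?_ h
    filter_upwards [self_mem_nhdsWithin] with t ht
    have ht' : t ≠ 0 := ne_of_gt ht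
    field_simp

lemma limN : Tendsto (fun t : ℝ =>
      (π*t*Real.cos (π*t) - Real.sin (π*t) + (π^2*t^2/3)*Real.sin (π*t))/t^5)
    (𝓝[>] (0:ℝ)) (𝓝 (-π^5/45)) := by
  apply HasDerivAt.lhopital_zero_right_on_Ioo (a := 0) (b := 1)
    (f' := fun t => (π^2/3)*t*(π*t*Real.cos (π*t) - Real.sin (π*t)))
    (g' := fun t => 5*t^4) one_pos
  · intro x _
    have h1 : HasDerivAt (fun t : ℝ => π*t) π x := by
      simpa using (hasDerivAt_id x).const_mul π
    have h2 : HasDerivAt (fun t : ℝ => Real.cos (π*t)) (-Real.sin (π*x)*π) x :=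
      (Real.hasDerivAt_cos (π*x)).comp x h1
    have h3 : HasDerivAt (fun t : ℝ => Real.sin (π*t)) (Real.cos (π*x)*π) x :=
      (Real.hasDerivAt_sin (π*x)).comp x h1
    have h4 : HasDerivAt (fun t : ℝ => π^2*t^2/3) (π^2*(2*x)/3) x := by
      have := ((hasDerivAt_pow 2 x).const_mul (π^2)).div_const 3
      exact this.congr_deriv (by push_cast; ring)
    have := ((h1.mul h2).sub h3).add (h4.mul h3)
    exact this.congr_deriv (by ring)
  · intro x _
    simpa using hasDerivAt_pow 5 x
  · intro x hx
    have : (0:ℝ) < x := hx.1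
    positivity
  · have : ContinuousAt (fun t : ℝ =>
        π*t*Real.cos (π*t) - Real.sin (π*t) + (π^2*t^2/3)*Real.sin (π*t)) 0 := by fun_prop
    have h := this.tendsto.mono_left (nhdsWithin_le_nhds (s := Ioi (0:ℝ)))
    simpa using h
  · have h := ((continuous_pow 5).tendsto (0:ℝ)).mono_left
      (nhdsWithin_le_nhds (s := Ioi (0:ℝ)))
    simpa using h
  · have h := limM.const_mul (π^2/15)
    have h2 : π^2/15*(-π^3/3) = -π^5/45 := by ring
    rw [h2] at h
    refine Tendsto.congr' ?_ h
    filter_upwards [self_mem_nhdsWithin] with t ht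
    have ht' : t ≠ 0 := ne_of_gt ht
    field_simp
    ring

lemma limF : Tendsto (fun t : ℝ =>
      (Real.cos (π*t)/Real.sin (π*t) - 1/(π*t) + π*t/3)/t^3)
    (𝓝[>] (0:ℝ)) (𝓝 (-π^3/45)) := by
  have hπ : π ≠ 0 := ne_of_gt pi_pos
  have h := (limN.mul (lim_sin.inv₀ hπ)).mul_const π⁻¹
  have h2 : -π^5/45 * π⁻¹ * π⁻¹ = -π^3/45 := by field_simp
  rw [h2] at h
  refine Tendsto.congr' ?_ h
  filter_upwards [Ioo_mem_nhdsGT_of_mem (by norm_num : (0:ℝ) ∈ Ico 0 1)] with t ht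
  have ht0 : t ≠ 0 := ne_of_gt ht.1
  have hs : Real.sin (π*t) > 0 :=
    Real.sin_pos_of_pos_of_lt_pi (mul_pos pi_pos ht.1)
      (by nlinarith [pi_pos, ht.2, ht.1])
  have hs' : Real.sin (π*t) ≠ 0 := ne_of_gt hs
  field_simp

/-- Third-order Taylor expansion of `g` at `1` in `t = 1 − x`:
`g(x) = −1/π − (π/3)t + (π/3)t² − (π³/45)t³ + o(t³)`, i.e.
`(g(x) − (−1/π − (π/3)(1−x) + (π/3)(1−x)²))/(1−x)³ → −π³/45` as `x → 1⁻`
(so that `g′′′(1) = 2π³/15`). -/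
theorem g_third_order_at_one :
    Tendsto (fun x : ℝ =>
        (g x - (-1 / π - (π / 3) * (1 - x) + (π / 3) * (1 - x) ^ 2)) / (1 - x) ^ 3)
      (𝓝[<] (1 : ℝ)) (𝓝 (-π ^ 3 / 45)) := by
  have hπ : π ≠ 0 := ne_of_gt pi_pos
  have hmap : Tendsto (fun x : ℝ => 1 - x) (𝓝[<] (1:ℝ)) (𝓝[>] (0:ℝ)) := by
    refine tendsto_nhdsWithin_of_tendsto_nhds_of_eventually_within _ ?_ ?_
    · have hc : Continuous (fun x : ℝ => 1 - x) := by continuity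
      have := (hc.tendsto (1:ℝ)).mono_left (nhdsWithin_le_nhds (s := Iio (1:ℝ)))
      simpa using this
    · filter_upwards [self_mem_nhdsWithin] with x hx
      simpa using sub_pos.mpr (mem_Iio.mp hx)
  have hone : Tendsto (fun t : ℝ => 1 - t) (𝓝[>] (0:ℝ)) (𝓝 (1:ℝ)) := by
    have hc : Continuous (fun t : ℝ => 1 - t) := by continuity
    have := (hc.tendsto (0:ℝ)).mono_left (nhdsWithin_le_nhds (s := Ioi (0:ℝ)))
    simpa using this
  have hH : Tendsto (fun t : ℝ =>
      (1 - t) * ((Real.cos (π*t)/Real.sin (π*t) - 1/(π*t) + π*t/3)/t^3))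
      (𝓝[>] (0:ℝ)) (𝓝 (-π^3/45)) := by
    have := hone.mul limF
    simpa using this
  have key := hH.comp hmap
  refine Tendsto.congr' ?_ key
  filter_upwards [Ioo_mem_nhdsLT_of_mem (by norm_num : (1:ℝ) ∈ Ioc 0 1)] with x hx
  have hx0 : 0 < x := hx.1
  have hx1 : x < 1 := hx.2
  have ht0 : (1:ℝ) - x ≠ 0 := by linarith
  have hsx : Real.sin (π*x) > 0 :=
    Real.sin_pos_of_pos_of_lt_pi (mul_pos pi_pos hx0) (by nlinarith [pi_pos])
  have hsx' : Real.sin (π*x) ≠ 0 := ne_of_gt hsx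
  have hs : Real.sin (π*(1-x)) = Real.sin (π*x) := by
    rw [show π*(1-x) = π - π*x by ring, Real.sin_pi_sub]
  have hc : Real.cos (π*(1-x)) = -Real.cos (π*x) := by
    rw [show π*(1-x) = π - π*x by ring, Real.cos_pi_sub]
  simp only [Function.comp, g, Real.cot_eq_cos_div_sin, hs, hc]
  field_simp
  ring
end

section
/- Let f : [0,1] → ℝ be continuously differentiable and let k ≥ 1 be an integer. Then the series ∑_{m=1}^{∞} ∫₀¹ f(x) cos(2πmkx) dx converges, and the Poisson summation formula for finite sums holds: ∑_{m=1}^{k−1} f(m/k) = −f(0)/2 − f(1)/2 + k∫₀¹ f(x) dx + 2k ∑_{m=1}^{∞} ∫₀¹ f(x) cos(2πmkx) dx. -/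
open Real Filter Topology Complex Set MeasureTheory intervalIntegral

private lemma fourierCoeffOn_congr' {a b b' : ℝ} (h : b = b') (hab : a < b) (hab' : a < b')
    (f : ℝ → ℂ) (n : ℤ) : fourierCoeffOn hab f n = fourierCoeffOn hab' f n := by
  subst h; rfl

private lemma integral_x_cos' (a : ℝ) (ha : a ≠ 0) (hsin : Real.sin a = 0)
    (hcos : Real.cos a = 1) : ∫ x in (0:ℝ)..1, x * Real.cos (a * x) = 0 := by
  have key : ∀ x ∈ Set.uIcc (0:ℝ) 1,
      HasDerivAt (fun y => y * Real.sin (a*y)/a + Real.cos (a*y)/a^2)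
        (x * Real.cos (a*x)) x := by
    intro x _
    have hs : HasDerivAt (fun y : ℝ => Real.sin (a*y)) (a * Real.cos (a*x)) x := by
      refine ((Real.hasDerivAt_sin (a*x)).comp x ((hasDerivAt_id x).const_mul a)).congr_deriv ?_; ring
    have hc : HasDerivAt (fun y : ℝ => Real.cos (a*y)) (a * (-Real.sin (a*x))) x := by
      refine ((Real.hasDerivAt_cos (a*x)).comp x ((hasDerivAt_id x).const_mul a)).congr_deriv ?_; ring
    have h1 : HasDerivAt (fun y : ℝ => y * Real.sin (a*y))
        (1 * Real.sin (a*x) + x * (a * Real.cos (a*x))) x := (hasDerivAt_id x).mul hs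
    have := ((h1.div_const a).add (hc.div_const (a^2)))
    refine this.congr_deriv ?_
    field_simp
    ring
  have hint : IntervalIntegrable (fun x => x * Real.cos (a * x)) volume 0 1 :=
    (continuous_id.mul (Real.continuous_cos.comp (continuous_const.mul continuous_id))).intervalIntegrable 0 1
  rw [intervalIntegral.integral_eq_sub_of_hasDerivAt key hint]
  simp [hsin, hcos]

private lemma exp_sum_eq' (k : ℕ) (hk : k ≠ 0) (n : ℤ) :
    ∑ j ∈ Finset.range k, Complex.exp (2 * π * Complex.I * n * j / k)
      = if (k:ℤ) ∣ n then (k:ℂ) else 0 := by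
  have hkc : (k:ℂ) ≠ 0 := Nat.cast_ne_zero.mpr hk
  have hterm : ∀ j : ℕ, Complex.exp (2 * π * Complex.I * n * j / k)
      = Complex.exp (2 * π * Complex.I * n / k) ^ j := by
    intro j
    rw [← Complex.exp_nat_mul]
    congr 1
    ring
  simp_rw [hterm]
  have hzk : Complex.exp (2 * π * Complex.I * n / k) ^ k = 1 := by
    rw [← Complex.exp_nat_mul]
    have : (k:ℂ) * (2 * π * Complex.I * n / k) = n * (2 * π * Complex.I) := by
      field_simp
    rw [this, Complex.exp_int_mul_two_pi_mul_I]
  by_cases hd : (k:ℤ) ∣ n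
  · obtain ⟨m, rfl⟩ := hd
    rw [if_pos ⟨m, rfl⟩]
    have hz1 : Complex.exp (2 * π * Complex.I * (((k:ℤ)*m : ℤ) : ℂ) / k) = 1 := by
      have h2 : (2 * (π:ℂ) * Complex.I * (((k:ℤ)*m : ℤ) : ℂ) / k) = (m:ℂ) * (2 * π * Complex.I) := by
        push_cast
        field_simp
      rw [h2]
      exact_mod_cast Complex.exp_int_mul_two_pi_mul_I m
    rw [hz1]
    simp
  · have hz1 : Complex.exp (2 * π * Complex.I * n / k) ≠ 1 := by
      intro h
      obtain ⟨m, hm⟩ := Complex.exp_eq_one_iff.mp h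
      apply hd
      refine ⟨m, ?_⟩
      have hIpi : (2:ℂ) * π * Complex.I ≠ 0 := by
        simp [Real.pi_ne_zero, Complex.I_ne_zero, Complex.ofReal_ne_zero]
      have : (n:ℂ) = m * k := by
        field_simp at hm
        have h2 : (n:ℂ) * (2 * π * Complex.I) = (m:ℂ) * (k:ℂ) * (2 * π * Complex.I) := by
          linear_combination (2 * π * Complex.I) * hm
        have := mul_right_cancel₀ hIpi h2
        linear_combination this
      have h3 : n = m * k := by exact_mod_cast this
      rw [h3, mul_comm]
    rw [geom_sum_eq hz1, hzk]
    simp [if_neg hd]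

set_option maxHeartbeats 1000000 in
/-- Poisson summation formula for finite sums: for `f` continuously differentiable
on `[0,1]` and `k ≥ 1`, the series `∑_{m=1}^∞ ∫₀¹ f(x) cos(2πmkx) dx` converges and
`∑_{m=1}^{k−1} f(m/k) = −f(0)/2 − f(1)/2 + k∫₀¹ f + 2k ∑_{m=1}^∞ ∫₀¹ f(x) cos(2πmkx) dx`. -/
theorem poisson_summation_finite (f : ℝ → ℝ)
    (hf : ContDiffOn ℝ 1 f (Set.Icc 0 1)) (k : ℕ) (hk : 1 ≤ k) :
    ∃ S : ℝ,
      Tendsto (fun N : ℕ => ∑ m ∈ Finset.Icc 1 N,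
          ∫ x in (0 : ℝ)..1, f x * Real.cos (2 * π * m * k * x)) atTop (𝓝 S) ∧
      ∑ m ∈ Finset.Icc 1 (k - 1), f (m / k) =
        -f 0 / 2 - f 1 / 2 + k * (∫ x in (0 : ℝ)..1, f x) + 2 * k * S := by
  haveI : Fact ((0:ℝ) < 1) := ⟨one_pos⟩
  have h01 : (0:ℝ) < 1 := one_pos
  have hkn0 : k ≠ 0 := by omega
  have hk0 : (k:ℝ) ≠ 0 := Nat.cast_ne_zero.mpr hkn0
  have hIcc : Set.uIcc (0:ℝ) 1 = Set.Icc 0 1 := uIcc_of_le zero_le_one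
  set c : ℝ := f 1 - f 0 with hc
  set g : ℝ → ℝ := fun x => f x - c * x with hg
  have hfc : ContinuousOn f (Set.Icc 0 1) := hf.continuousOn
  have hgc : ContinuousOn g (Set.Icc 0 1) :=
    hfc.sub ((continuous_const.mul continuous_id).continuousOn)
  set f' : ℝ → ℝ := derivWithin f (Set.Icc 0 1) with hf'
  have hf'c : ContinuousOn f' (Set.Icc 0 1) :=
    hf.continuousOn_derivWithin (uniqueDiffOn_Icc one_pos) le_rfl
  have hgderiv : ∀ x ∈ Set.Ioo (0:ℝ) 1, HasDerivAt g (f' x - c) x := by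
    intro x hx
    have h1 : Set.Icc (0:ℝ) 1 ∈ 𝓝 x := Icc_mem_nhds hx.1 hx.2
    have h2 : DifferentiableWithinAt ℝ f (Set.Icc 0 1) x :=
      (hf.differentiableOn one_ne_zero) x (Set.Ioo_subset_Icc_self hx)
    have h3 : DifferentiableAt ℝ f x := h2.differentiableAt h1
    have h4 : f' x = deriv f x := derivWithin_of_mem_nhds h1
    rw [h4]
    have h5 : HasDerivAt (fun y => c * y) (c * 1) x := (hasDerivAt_id x).const_mul c
    exact (h3.hasDerivAt.sub h5).congr_deriv (by ring)
  -- complexifications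
  set F : ℝ → ℂ := fun x => ((g x : ℝ) : ℂ) with hF
  set F' : ℝ → ℂ := fun x => ((f' x - c : ℝ) : ℂ) with hF'
  have hFcont : ContinuousOn F (Set.Icc 0 1) := Complex.continuous_ofReal.comp_continuousOn hgc
  have hF'cont : ContinuousOn F' (Set.Icc 0 1) :=
    Complex.continuous_ofReal.comp_continuousOn (hf'c.sub continuousOn_const)
  have hF01 : F 0 = F 1 := by
    simp only [hF, hg, hc]
    norm_num
  set cc : ℤ → ℂ := fun n => fourierCoeffOn h01 F n with hccdef
  set cc' : ℤ → ℂ := fun n => fourierCoeffOn h01 F' n with hcc'def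
  -- (A) explicit integral formula
  have hA : ∀ n : ℤ, cc n
      = ∫ x in (0:ℝ)..1, Complex.exp (-((2*π*(n:ℝ)*x : ℝ) : ℂ) * Complex.I) * ((g x : ℝ):ℂ) := by
    intro n
    show fourierCoeffOn h01 F n = _
    rw [fourierCoeffOn_eq_integral]
    simp only [sub_zero, div_one, one_smul, smul_eq_mul, one_div]
    apply intervalIntegral.integral_congr
    intro x hx
    beta_reduce
    rw [fourier_coe_apply]
    congr 1
    push_cast
    ring
  -- (B) derivative relation
  have hB : ∀ n : ℤ, n ≠ 0 → cc n = 1/(2*π*Complex.I*n) * cc' n := by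
    intro n hn
    have h := fourierCoeffOn_of_hasDerivAt_Ioo h01 hn
      (f := F) (f' := F')
      (by rw [hIcc]; exact hFcont)
      (by
        intro x hx
        rw [min_eq_left zero_le_one, max_eq_right zero_le_one] at hx
        exact (hgderiv x hx).ofReal_comp)
      (by
        apply ContinuousOn.intervalIntegrable
        rw [hIcc]; exact hF'cont)
    rw [← hF01] at h
    simp only [sub_self, mul_zero, zero_sub] at h
    rw [hccdef, hcc'def]
    have hpi : (π:ℂ) ≠ 0 := Complex.ofReal_ne_zero.mpr Real.pi_ne_zero
    have hnc : (n:ℂ) ≠ 0 := Int.cast_ne_zero.mpr hn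
    field_simp at h ⊢
    push_cast at h
    linear_combination h
  -- pairing formula
  have hgint : IntervalIntegrable g volume 0 1 := by
    apply ContinuousOn.intervalIntegrable; rw [hIcc]; exact hgc
  have hpair : ∀ n : ℤ, cc n + cc (-n)
      = ((∫ x in (0:ℝ)..1, 2 * (g x * Real.cos (2*π*(n:ℝ)*x)) : ℝ) : ℂ) := by
    intro n
    rw [hA n, hA (-n)]
    rw [← intervalIntegral.integral_add]
    · rw [← intervalIntegral.integral_ofReal]
      apply intervalIntegral.integral_congr
      intro x hx
      beta_reduce
      have e1 : ((2*π*((-n : ℤ):ℝ)*x : ℝ) : ℂ) = -((2*π*(n:ℝ)*x : ℝ) : ℂ) := by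
        push_cast; ring
      rw [e1, neg_neg]
      rw [← add_mul]
      rw [add_comm]
      push_cast
      rw [← Complex.two_cos]
      ring
    · apply ContinuousOn.intervalIntegrable
      apply ContinuousOn.mul _ (Complex.continuous_ofReal.comp_continuousOn (by rw [hIcc]; exact hgc))
      apply Continuous.continuousOn
      exact Complex.continuous_exp.comp (by continuity)
    · apply ContinuousOn.intervalIntegrable
      apply ContinuousOn.mul _ (Complex.continuous_ofReal.comp_continuousOn (by rw [hIcc]; exact hgc))
      apply Continuous.continuousOn
      exact Complex.continuous_exp.comp (by continuity)
  -- Bessel: summability of squared derivative coefficients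
  have hsq : Summable (fun n : ℤ => ‖cc' n‖^2) := by
    set H' : AddCircle (1:ℝ) → ℂ := AddCircle.liftIoc 1 0 F' with hH'
    have hmeasH : Measurable H' := by
      have h1 : Continuous (Set.restrict (Set.Ioc (0:ℝ) (0+1)) F') := by
        apply ContinuousOn.restrict
        rw [zero_add]
        exact hF'cont.mono Set.Ioc_subset_Icc_self
      exact h1.measurable.comp (AddCircle.measurableEquivIoc 1 0).measurable
    obtain ⟨C, hC⟩ := IsCompact.exists_bound_of_continuousOn isCompact_Icc hF'cont
    have hbd : ∀ z, ‖H' z‖ ≤ C := by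
      intro z
      have h2 := (AddCircle.equivIoc 1 0 z).2
      exact hC _ ⟨h2.1.le, by linarith [h2.2]⟩
    have hmem : MemLp H' 2 AddCircle.haarAddCircle :=
      MemLp.of_bound hmeasH.aestronglyMeasurable C (Filter.Eventually.of_forall hbd)
    set xLp : Lp ℂ 2 AddCircle.haarAddCircle := hmem.toLp H' with hxLp
    have hx : ∀ n : ℤ, fourierCoeff (⇑xLp) n = cc' n := by
      intro n
      have e1 : fourierCoeff (⇑xLp) n = fourierCoeff H' n := by
        unfold fourierCoeff
        apply MeasureTheory.integral_congr_ae
        filter_upwards [hmem.coeFn_toLp] with t ht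
        rw [ht]
      rw [e1, hH']
      rw [fourierCoeff_liftIoc_eq]
      exact fourierCoeffOn_congr' (by norm_num) _ h01 F' n
    have hb := (orthonormal_fourier (T := 1)).inner_products_summable (x := xLp)
    apply hb.congr
    intro i
    rw [← coe_fourierBasis, ← HilbertBasis.repr_apply_apply, fourierBasis_repr, hx]
  -- summability of cc
  have hsum : Summable cc := by
    apply Summable.of_norm_bounded_eventually
      (g := fun n : ℤ => ((1/(2*π*(n:ℝ)))^2 + ‖cc' n‖^2)/2)
    · apply Summable.div_const
      apply Summable.add _ hsq
      have h1 : Summable (fun n : ℤ => (1/(2*π))^2 * (1/(n:ℝ)^2)) :=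
        (summable_one_div_int_pow.mpr one_lt_two).mul_left _
      apply h1.congr
      intro n
      simp only [div_pow, mul_pow, one_div, mul_inv, one_pow]
      ring
    · rw [Filter.eventually_cofinite]
      apply Set.Finite.subset (Set.finite_singleton (0:ℤ))
      intro n hn
      simp only [Set.mem_setOf_eq, not_le] at hn
      simp only [Set.mem_singleton_iff]
      by_contra hn0
      apply absurd hn
      push_neg
      have hnc : ‖cc n‖ = 1/(2*π*|(n:ℝ)|) * ‖cc' n‖ := by
        rw [hB n hn0, norm_mul]
        congr 1
        rw [norm_div, norm_one]
        simp only [norm_mul, Complex.norm_ofNat, Complex.norm_real, Complex.norm_I, mul_one,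
          Complex.norm_intCast]
        rw [Real.norm_eq_abs, abs_of_pos Real.pi_pos]
      rw [hnc]
      have habs : (1/(2*π*|(n:ℝ)|))^2 = (1/(2*π*(n:ℝ)))^2 := by
        rw [div_pow, div_pow, mul_pow, mul_pow, _root_.sq_abs]
        ring
      rw [← habs]
      linarith [two_mul_le_add_sq (1/(2*π*|(n:ℝ)|)) ‖cc' n‖]
  -- the continuous periodization G
  set G : C(AddCircle (1:ℝ), ℂ) := ⟨AddCircle.liftIco 1 0 F,
    AddCircle.liftIco_zero_continuous hF01 (by exact hFcont)⟩ with hG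
  have hGcoeff : fourierCoeff (⇑G) = cc := by
    funext n
    show fourierCoeff (AddCircle.liftIco 1 0 F) n = cc n
    rw [fourierCoeff_liftIco_eq]
    exact fourierCoeffOn_congr' (by norm_num) _ h01 F n
  have hGsum : Summable (fourierCoeff (⇑G)) := by rw [hGcoeff]; exact hsum
  -- pointwise sums at j/k
  have hpt : ∀ j ∈ Finset.range k,
      HasSum (fun n : ℤ => cc n * fourier n ((((j:ℝ)/(k:ℝ) : ℝ)) : AddCircle (1:ℝ)))
        (((g ((j:ℝ)/k) : ℝ) : ℂ)) := by
    intro j hj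
    have hjk : (j:ℝ)/k ∈ Set.Ico (0:ℝ) 1 := by
      constructor
      · positivity
      · rw [div_lt_one (by positivity)]
        exact_mod_cast Finset.mem_range.mp hj
    have h := has_pointwise_sum_fourier_series_of_summable hGsum ((((j:ℝ)/(k:ℝ) : ℝ)) : AddCircle (1:ℝ))
    rw [hGcoeff] at h
    have hGval : G ((((j:ℝ)/(k:ℝ) : ℝ)) : AddCircle (1:ℝ)) = ((g ((j:ℝ)/k) : ℝ) : ℂ) := by
      show AddCircle.liftIco 1 0 F _ = _
      rw [AddCircle.liftIco_zero_coe_apply hjk]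
    rw [hGval] at h
    simpa only [smul_eq_mul, mul_comm] using h
  -- character sum
  have hW : ∀ n : ℤ, (∑ j ∈ Finset.range k, (fourier n ((((j:ℝ)/(k:ℝ) : ℝ)) : AddCircle (1:ℝ)) : ℂ))
      = if (k:ℤ) ∣ n then (k:ℂ) else 0 := by
    intro n
    rw [← exp_sum_eq' k hkn0 n]
    apply Finset.sum_congr rfl
    intro j hj
    rw [fourier_coe_apply]
    push_cast
    rw [div_one]
    congr 1
    ring
  have hSum1 : HasSum (fun n : ℤ => cc n * (if (k:ℤ) ∣ n then (k:ℂ) else 0))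
      (∑ j ∈ Finset.range k, ((g ((j:ℝ)/k) : ℝ) : ℂ)) := by
    have h := hasSum_sum (f := fun (j : ℕ) (n : ℤ) => cc n * fourier n ((((j:ℝ)/(k:ℝ) : ℝ)) : AddCircle (1:ℝ)))
      (a := fun j => ((g ((j:ℝ)/k) : ℝ) : ℂ)) (s := Finset.range k) hpt
    have hfun : (fun n : ℤ => ∑ j ∈ Finset.range k, cc n * fourier n ((((j:ℝ)/(k:ℝ) : ℝ)) : AddCircle (1:ℝ)))
        = fun n : ℤ => cc n * (if (k:ℤ) ∣ n then (k:ℂ) else 0) := by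
      funext n
      rw [← Finset.mul_sum, hW n]
    rwa [hfun] at h
  -- restrict to multiples of k
  have hkZ : (k:ℤ) ≠ 0 := by exact_mod_cast hkn0
  have hSum2 : HasSum (fun m : ℤ => (k:ℂ) * cc ((k:ℤ)*m))
      (∑ j ∈ Finset.range k, ((g ((j:ℝ)/k) : ℝ) : ℂ)) := by
    have hinj : Function.Injective (fun m : ℤ => (k:ℤ)*m) := fun a b hab =>
      mul_left_cancel₀ hkZ hab
    have hvan : ∀ n : ℤ, n ∉ Set.range (fun m : ℤ => (k:ℤ)*m) →
        cc n * (if (k:ℤ) ∣ n then (k:ℂ) else 0) = 0 := by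
      intro n hn
      rw [if_neg, mul_zero]
      rintro ⟨m, hm⟩
      exact hn ⟨m, hm.symm⟩
    have h2 := (Function.Injective.hasSum_iff hinj hvan).mpr hSum1
    have hfun : ((fun n : ℤ => cc n * (if (k:ℤ) ∣ n then (k:ℂ) else 0)) ∘ (fun m : ℤ => (k:ℤ)*m))
        = fun m : ℤ => (k:ℂ) * cc ((k:ℤ)*m) := by
      funext m
      show cc ((k:ℤ)*m) * (if (k:ℤ) ∣ (k:ℤ)*m then (k:ℂ) else 0) = (k:ℂ) * cc ((k:ℤ)*m)
      rw [if_pos ⟨m, rfl⟩, mul_comm]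
    rwa [hfun] at h2
  -- value of the zeroth coefficient
  have hcc0 : cc 0 = ((∫ x in (0:ℝ)..1, g x : ℝ) : ℂ) := by
    rw [hA 0, ← intervalIntegral.integral_ofReal]
    apply intervalIntegral.integral_congr
    intro x hx
    beta_reduce
    norm_num
  have hcos_int : ∀ m : ℕ,
      IntervalIntegrable (fun x => g x * Real.cos (2*π*(m:ℝ)*(k:ℝ)*x)) volume 0 1 := by
    intro m
    apply ContinuousOn.intervalIntegrable
    rw [hIcc]
    exact hgc.mul (Continuous.continuousOn (by continuity))
  -- pairing into cosine integrals
  have e1 : ∀ m : ℕ, (k:ℂ) * cc ((k:ℤ)*(m:ℤ)) + (k:ℂ) * cc ((k:ℤ)*(-(m:ℤ)))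
      = ((2*(k:ℝ)*(∫ x in (0:ℝ)..1, g x * Real.cos (2*π*(m:ℝ)*(k:ℝ)*x)) : ℝ) : ℂ) := by
    intro m
    rw [mul_neg, ← mul_add, hpair ((k:ℤ)*(m:ℤ))]
    have h4 : (∫ x in (0:ℝ)..1, 2*(g x * Real.cos (2*π*((((k:ℤ)*(m:ℤ) : ℤ)):ℝ)*x)))
        = 2*(∫ x in (0:ℝ)..1, g x * Real.cos (2*π*(m:ℝ)*(k:ℝ)*x)) := by
      rw [intervalIntegral.integral_const_mul]
      congr 1
      apply intervalIntegral.integral_congr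
      intro x hx
      beta_reduce
      congr 2
      push_cast
      ring
    rw [h4]
    push_cast
    ring
  have hval : (∑ j ∈ Finset.range k, ((g ((j:ℝ)/k) : ℝ):ℂ)) + (k:ℂ) * cc ((k:ℤ) * 0)
      = ((((∑ j ∈ Finset.range k, g ((j:ℝ)/k)) + k * (∫ x in (0:ℝ)..1, g x)) : ℝ) : ℂ) := by
    rw [mul_zero, hcc0]
    push_cast
    ring
  have hSum4 : HasSum (fun m : ℕ =>
        ((2*(k:ℝ)*(∫ x in (0:ℝ)..1, g x * Real.cos (2*π*(m:ℝ)*(k:ℝ)*x)) : ℝ) : ℂ))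
      ((((∑ j ∈ Finset.range k, g ((j:ℝ)/k)) + k * (∫ x in (0:ℝ)..1, g x) : ℝ)) : ℂ) := by
    have h3 := hSum2.nat_add_neg
    rw [funext e1] at h3
    rwa [hval] at h3
  have hSum5 : HasSum (fun m : ℕ =>
        2*(k:ℝ)*(∫ x in (0:ℝ)..1, g x * Real.cos (2*π*(m:ℝ)*(k:ℝ)*x)))
      ((∑ j ∈ Finset.range k, g ((j:ℝ)/k)) + k * (∫ x in (0:ℝ)..1, g x)) := by
    have h4 := hSum4.mapL Complex.reCLM
    simpa using h4
  have h2k0 : (2*(k:ℝ)) ≠ 0 := by positivity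
  have hSum6 : HasSum (fun m : ℕ => (∫ x in (0:ℝ)..1, g x * Real.cos (2*π*(m:ℝ)*(k:ℝ)*x)))
      (((∑ j ∈ Finset.range k, g ((j:ℝ)/k)) + k * (∫ x in (0:ℝ)..1, g x))/(2*(k:ℝ))) := by
    have h5 := hSum5.div_const (2*(k:ℝ))
    have hfun3 : (fun m : ℕ =>
        (2*(k:ℝ)*(∫ x in (0:ℝ)..1, g x * Real.cos (2*π*(m:ℝ)*(k:ℝ)*x)))/(2*(k:ℝ)))
        = fun m : ℕ => (∫ x in (0:ℝ)..1, g x * Real.cos (2*π*(m:ℝ)*(k:ℝ)*x)) := by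
      funext m
      exact mul_div_cancel_left₀ _ h2k0
    rwa [hfun3] at h5
  -- replacing g by f in the positive-index integrals
  have hAB : ∀ m : ℕ, 1 ≤ m → (∫ x in (0:ℝ)..1, f x * Real.cos (2*π*(m:ℝ)*(k:ℝ)*x))
      = ∫ x in (0:ℝ)..1, g x * Real.cos (2*π*(m:ℝ)*(k:ℝ)*x) := by
    intro m hm
    have hm0 : (0:ℝ) < (m:ℝ) := by exact_mod_cast Nat.lt_of_lt_of_le Nat.zero_lt_one hm
    have hk0' : (0:ℝ) < (k:ℝ) := by exact_mod_cast Nat.pos_of_ne_zero hkn0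
    have hmk1 : (0:ℝ) < 2*π*(m:ℝ)*(k:ℝ) :=
      mul_pos (mul_pos (mul_pos two_pos Real.pi_pos) hm0) hk0'
    have hsin : Real.sin (2*π*(m:ℝ)*(k:ℝ)) = 0 := by
      have harg : 2*π*(m:ℝ)*(k:ℝ) = ((2*m*k : ℕ) : ℝ) * π := by push_cast; ring
      rw [harg, Real.sin_nat_mul_pi]
    have hcos1 : Real.cos (2*π*(m:ℝ)*(k:ℝ)) = 1 := by
      have harg : 2*π*(m:ℝ)*(k:ℝ) = ((m*k : ℕ) : ℝ) * (2*π) := by push_cast; ring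
      rw [harg, Real.cos_nat_mul_two_pi]
    have h0 := integral_x_cos' (2*π*(m:ℝ)*(k:ℝ)) (ne_of_gt hmk1) hsin hcos1
    have hsplit : (∫ x in (0:ℝ)..1, f x * Real.cos (2*π*(m:ℝ)*(k:ℝ)*x))
        = (∫ x in (0:ℝ)..1, (g x * Real.cos (2*π*(m:ℝ)*(k:ℝ)*x)
            + c * (x * Real.cos (2*π*(m:ℝ)*(k:ℝ)*x)))) := by
      apply intervalIntegral.integral_congr
      intro x hx
      beta_reduce
      simp only [hg]
      ring
    have hcont1 : Continuous fun x : ℝ => 2*π*(m:ℝ)*(k:ℝ)*x :=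
      continuous_const.mul continuous_id
    have hxint : IntervalIntegrable (fun x : ℝ => c * (x * Real.cos (2*π*(m:ℝ)*(k:ℝ)*x)))
        volume 0 1 :=
      (Continuous.intervalIntegrable
        (continuous_const.mul (continuous_id.mul (Real.continuous_cos.comp hcont1))) 0 1)
    rw [hsplit, intervalIntegral.integral_add (hcos_int m) hxint,
      intervalIntegral.integral_const_mul, h0, mul_zero, add_zero]
  -- choose S
  refine ⟨((∑ j ∈ Finset.range k, g ((j:ℝ)/k)) + k * (∫ x in (0:ℝ)..1, g x))/(2*(k:ℝ))
      - (∫ x in (0:ℝ)..1, g x), ?_, ?_⟩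
  · -- the Tendsto statement
    have hT1 := hSum6.tendsto_sum_nat
    have hT2 := (hT1.comp (tendsto_add_atTop_nat 1)).sub_const (∫ x in (0:ℝ)..1, g x)
    refine Filter.Tendsto.congr (fun N => ?_) hT2
    simp only [Function.comp_apply]
    have hr : Finset.range (N+1) = insert 0 (Finset.Icc 1 N) := by
      ext m
      simp only [Finset.mem_range, Finset.mem_insert, Finset.mem_Icc]
      omega
    rw [hr, Finset.sum_insert (by simp)]
    have hB0 : (∫ x in (0:ℝ)..1, g x * Real.cos (2*π*((0:ℕ):ℝ)*(k:ℝ)*x))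
        = ∫ x in (0:ℝ)..1, g x := by
      apply intervalIntegral.integral_congr
      intro x hx
      beta_reduce
      norm_num
    rw [hB0]
    have hsc : (∑ m ∈ Finset.Icc 1 N, ∫ x in (0:ℝ)..1, g x * Real.cos (2*π*(m:ℝ)*(k:ℝ)*x))
        = ∑ m ∈ Finset.Icc 1 N, ∫ x in (0:ℝ)..1, f x * Real.cos (2*π*(m:ℝ)*(k:ℝ)*x) :=
      Finset.sum_congr rfl (fun m hm => (hAB m (Finset.mem_Icc.mp hm).1).symm)
    rw [hsc]
    ring
  · -- the identity
    have hr2 : Finset.range k = insert 0 (Finset.Icc 1 (k-1)) := by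
      ext m
      simp only [Finset.mem_range, Finset.mem_insert, Finset.mem_Icc]
      omega
    have hgauss : (∑ j ∈ Finset.range k, ((j:ℝ)/k)) = ((k:ℝ)-1)/2 := by
      rw [← Finset.sum_div]
      have h9 : (∑ j ∈ Finset.range k, ((j:ℕ):ℝ)) = ((∑ j ∈ Finset.range k, j : ℕ) : ℝ) := by
        push_cast
        ring
      have h7 := Finset.sum_range_id_mul_two k
      have h8 : ((∑ j ∈ Finset.range k, j : ℕ):ℝ)*2 = (k:ℝ)*(((k-1 : ℕ)):ℝ) := by
        exact_mod_cast congrArg (fun z : ℕ => (z:ℝ)) h7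
      rw [Nat.cast_sub hk] at h8
      rw [h9]
      rw [div_eq_div_iff hk0 two_ne_zero]
      push_cast at h8 ⊢
      linarith
    have hSgsum : (∑ j ∈ Finset.range k, g ((j:ℝ)/k))
        = f 0 + (∑ m ∈ Finset.Icc 1 (k-1), f ((m:ℝ)/k)) - c*(((k:ℝ)-1)/2) := by
      have hc1 : (∑ j ∈ Finset.range k, g ((j:ℝ)/k))
          = (∑ j ∈ Finset.range k, f ((j:ℝ)/k)) - c * (∑ j ∈ Finset.range k, ((j:ℝ)/k)) := by
        rw [Finset.mul_sum, ← Finset.sum_sub_distrib]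
      rw [hc1, hgauss, hr2, Finset.sum_insert (by simp)]
      norm_num
    have hfint : IntervalIntegrable f volume 0 1 := by
      apply ContinuousOn.intervalIntegrable
      rw [hIcc]
      exact hfc
    have hxint2 : IntervalIntegrable (fun x : ℝ => c * x) volume 0 1 :=
      (Continuous.intervalIntegrable (continuous_const.mul continuous_id) 0 1)
    have hIgeq : (∫ x in (0:ℝ)..1, g x) = (∫ x in (0:ℝ)..1, f x) - c/2 := by
      have hc2 : (∫ x in (0:ℝ)..1, g x) = ∫ x in (0:ℝ)..1, (f x - c * x) := by
        apply intervalIntegral.integral_congr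
        intro x hx
        beta_reduce
        simp only [hg]
      rw [hc2, intervalIntegral.integral_sub hfint hxint2,
        intervalIntegral.integral_const_mul, integral_id]
      ring
    rw [hSgsum, hIgeq, hc]
    field_simp
    ring
end
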